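/- Let f : ℝ → ℝ be C², positive, with f·f'' ≥ (f')², and let E(τ,S) = f(S) g(τ) with g > 0, g'' > 0 and the additional condition (k(z) − 2k'(z)) ∫_z^∞ k(y)² dy ≥ k(z)³ where g(τ) = ∫_{ln(τ+1)}^∞ k(y)² dy and z = ln(τ+1). Then E_{ττ}·E_{SS} ≥ (E_{τS})², i.e. E is jointly convex in (τ,S) (given E_{ττ} > 0, E_{SS} ≥ 0). -/

import Mathlib

open Real Set Filter MeasureTheory
open scoped Topology

/-- Joint convexity `E_{ττ}E_{SS} ≥ E_{τS}²` for separable energies `E = f(S)g(τ)` with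
log-convex `f` and `g(τ) = ∫_{ln(τ+1)}^∞ k²` satisfying `(k − 2k')∫_z^∞ k² ≥ k³`. -/
theorem stmt_16 (f f' f'' g g' g'' k k' : ℝ → ℝ)
    (hf_C2 : ContDiff ℝ 2 f)
    (hf_deriv : ∀ S, HasDerivAt f (f' S) S)
    (hf'_deriv : ∀ S, HasDerivAt f' (f'' S) S)
    (hf_pos : ∀ S, 0 < f S)
    (hf''_nonneg : ∀ S, 0 ≤ f'' S)
    (hf_logcvx : ∀ S, f S * f'' S ≥ (f' S) ^ 2)
    (hk_pos : ∀ z > 0, 0 < k z)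
    (hk_deriv : ∀ z > 0, HasDerivAt k (k' z) z)
    (hk'_neg : ∀ z > 0, k' z < 0)
    (hg : ∀ τ > 0, g τ = ∫ y in Set.Ioi (Real.log (τ + 1)), (k y) ^ 2)
    (hg_deriv : ∀ τ > 0, HasDerivAt g (g' τ) τ)
    (hg'_deriv : ∀ τ > 0, HasDerivAt g' (g'' τ) τ)
    (hg_pos : ∀ τ > 0, 0 < g τ)
    (hg''_pos : ∀ τ > 0, 0 < g'' τ)
    (hkcvx : ∀ z > 0, (k z - 2 * k' z) * (∫ y in Set.Ioi z, (k y) ^ 2) ≥ (k z) ^ 3) :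
    ∀ τ > 0, ∀ S : ℝ, (f S * g'' τ) * (f'' S * g τ) ≥ (f' S * g' τ) ^ 2 := by
  -- notation
  set G : ℝ → ℝ := fun z => ∫ y in Set.Ioi z, (k y) ^ 2 with hG
  -- continuity of k² on (0,∞)
  have hkc : ∀ z ∈ Ioi (0:ℝ), ContinuousAt (fun y => k y ^ 2) z := fun z hz =>
    ((hk_deriv z hz).continuousAt.pow 2)
  -- integrability of k² on Ioi z for z > 0
  have hInt : ∀ z > (0:ℝ), IntegrableOn (fun y => k y ^ 2) (Ioi z) := by
    intro z hz
    by_contra h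
    have hτ : (0:ℝ) < Real.exp z - 1 := by
      have h1 : Real.exp 0 < Real.exp z := Real.exp_lt_exp.mpr hz
      simp only [Real.exp_zero] at h1
      linarith
    have hgz := hg _ hτ
    rw [show Real.exp z - 1 + 1 = Real.exp z by ring, Real.log_exp] at hgz
    have h0 : g (Real.exp z - 1) = 0 := by
      rw [hgz]; exact integral_undef h
    linarith [hg_pos _ hτ]
  -- FTC: derivative of G at z > 0
  have hGderiv : ∀ z > (0:ℝ), HasDerivAt G (-(k z)^2) z := by
    intro z hz
    have ha : (0:ℝ) < z/2 := by linarith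
    have hii : IntervalIntegrable (fun y => k y ^ 2) volume (z/2) z := by
      rw [intervalIntegrable_iff_integrableOn_Ioc_of_le (by linarith)]
      exact (hInt _ ha).mono_set Ioc_subset_Ioi_self
    have hmeas : StronglyMeasurableAtFilter (fun y => k y ^ 2) (𝓝 z) volume :=
      ContinuousAt.stronglyMeasurableAtFilter isOpen_Ioi hkc z hz
    have hF : HasDerivAt (fun w => G (z/2) - ∫ x in (z/2)..w, k x ^ 2) (-(k z)^2) z := by
      have := intervalIntegral.integral_hasDerivAt_right hii hmeas (hkc z hz)
      exact ((hasDerivAt_const z (G (z/2))).sub this).congr_deriv (by ring)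
    refine hF.congr_of_eventuallyEq ?_
    filter_upwards [isOpen_Ioi.mem_nhds (show z ∈ Ioi (z/2) by simp [Ioi]; linarith)] with w hw
    have hw' : z/2 ≤ w := le_of_lt hw
    have hsplit : G (z/2) = (∫ x in Ioc (z/2) w, k x ^ 2) + G w := by
      rw [hG]
      rw [← setIntegral_union (Ioc_disjoint_Ioi le_rfl) measurableSet_Ioi
        ((hInt _ ha).mono_set Ioc_subset_Ioi_self)
        ((hInt _ ha).mono_set (Ioi_subset_Ioi hw')), Ioc_union_Ioi_eq_Ioi hw']
    rw [intervalIntegral.integral_of_le hw']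
    linarith [hsplit]
  -- derivative of τ ↦ log (τ+1)
  have hLderiv : ∀ τ > (0:ℝ), HasDerivAt (fun τ => Real.log (τ + 1)) (1/(τ+1)) τ := by
    intro τ hτ
    have h1 : HasDerivAt (fun τ : ℝ => τ + 1) 1 τ := (hasDerivAt_id τ).add_const 1
    have := (Real.hasDerivAt_log (by linarith : τ + 1 ≠ 0)).comp τ h1
    exact this.congr_deriv (by simp)
  -- formula for g'
  have hg'eq : ∀ τ > (0:ℝ), g' τ = -(k (Real.log (τ+1)))^2 / (τ+1) := by
    intro τ hτ
    have hz : (0:ℝ) < Real.log (τ+1) := Real.log_pos (by linarith)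
    have hcomp : HasDerivAt (fun σ => G (Real.log (σ+1)))
        (-(k (Real.log (τ+1)))^2 * (1/(τ+1))) τ :=
      by have := (hGderiv _ hz).comp τ (hLderiv τ hτ); exact this
    have hgd : HasDerivAt g (-(k (Real.log (τ+1)))^2 * (1/(τ+1))) τ := by
      refine hcomp.congr_of_eventuallyEq ?_
      filter_upwards [isOpen_Ioi.mem_nhds (show τ ∈ Ioi (0:ℝ) from hτ)] with σ hσ
      exact hg σ hσ
    have := (hg_deriv τ hτ).unique hgd
    rw [this]; ring
  -- formula for g''
  have hg''eq : ∀ τ > (0:ℝ), g'' τ =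
      ((k (Real.log (τ+1)))^2 - 2 * k (Real.log (τ+1)) * k' (Real.log (τ+1))) / (τ+1)^2 := by
    intro τ hτ
    set z := Real.log (τ+1) with hzdef
    have hz : (0:ℝ) < z := Real.log_pos (by linarith)
    have hτ1 : (0:ℝ) < τ + 1 := by linarith
    -- derivative of φ σ = -(k (log (σ+1)))^2 * (σ+1)⁻¹ at τ
    have hkL : HasDerivAt (fun σ => k (Real.log (σ+1))) (k' z * (1/(τ+1))) τ :=
      (hk_deriv z hz).comp τ (hLderiv τ hτ)
    have hsq : HasDerivAt (fun σ => -(k (Real.log (σ+1)))^2)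
        (-(2 * k z * (k' z * (1/(τ+1))))) τ := by
      have := (hkL.pow 2).neg
      refine this.congr_deriv ?_
      rw [← hzdef]
      norm_num
    have hinv : HasDerivAt (fun σ : ℝ => (σ+1)⁻¹) (-1/(τ+1)^2) τ := by
      have h1 : HasDerivAt (fun σ : ℝ => σ + 1) 1 τ := (hasDerivAt_id τ).add_const 1
      exact h1.inv (by linarith)
    have hφ : HasDerivAt (fun σ => -(k (Real.log (σ+1)))^2 * (σ+1)⁻¹)
        (((k z)^2 - 2 * k z * k' z) / (τ+1)^2) τ := by
      have := hsq.mul hinv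
      refine this.congr_deriv ?_
      field_simp
      ring
    have hgd : HasDerivAt g' (((k z)^2 - 2 * k z * k' z) / (τ+1)^2) τ := by
      refine hφ.congr_of_eventuallyEq ?_
      filter_upwards [isOpen_Ioi.mem_nhds (show τ ∈ Ioi (0:ℝ) from hτ)] with σ hσ
      rw [hg'eq σ hσ]; ring
    exact (hg'_deriv τ hτ).unique hgd
  -- key inequality: g g'' ≥ g'²
  have hgg : ∀ τ > (0:ℝ), g τ * g'' τ ≥ (g' τ)^2 := by
    intro τ hτ
    set z := Real.log (τ+1) with hzdef
    have hz : (0:ℝ) < z := Real.log_pos (by linarith)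
    have hτ1 : (0:ℝ) < τ + 1 := by linarith
    have hgG : g τ = G z := hg τ hτ
    have hkz : 0 < k z := hk_pos z hz
    have hkey : ((k z)^2 - 2 * k z * k' z) * G z ≥ (k z)^4 := by
      have h1 := hkcvx z hz
      nlinarith [h1, hkz]
    rw [hgG, hg''eq τ hτ, hg'eq τ hτ, ← hzdef, ge_iff_le, div_pow, ← mul_div_assoc,
      div_le_div_iff₀ (by positivity) (by positivity)]
    nlinarith [hkey, sq_nonneg (τ+1), pow_pos hτ1 2]
  -- conclude
  intro τ hτ S
  have hff := hf_logcvx S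
  have hgg' := hgg τ hτ
  have h1 : (0:ℝ) ≤ (g' τ)^2 := sq_nonneg _
  have h2 : (0:ℝ) ≤ f S * f'' S := le_trans (sq_nonneg _) hff
  calc (f' S * g' τ)^2 = (f' S)^2 * (g' τ)^2 := by ring
    _ ≤ (f S * f'' S) * (g τ * g'' τ) := mul_le_mul hff hgg' h1 h2
    _ = (f S * g'' τ) * (f'' S * g τ) := by ring
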